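/- Let d ≥ 1 and define the selection function g : ℝ^d × ℝ^d × ℝ → ℝ^d by g(x, y, t) = x if t ≥ 0 and g(x, y, t) = y if t < 0. Then for every ε > 0, α > 0 and M > 0 there exist a real (2d + 2) × (2d + 1) matrix W₁, a vector b₁ ∈ ℝ^{2d+2}, and a real d × (2d + 2) matrix W₂ such that the two-layer GeLU network f(x, y, t) = W₂·GeLU(W₁·(x, y, t) + b₁) satisfies ‖f(x, y, t) − g(x, y, t)‖_∞ ≤ ε for all x ∈ [−M, M]^d, y ∈ [−M, M]^d, and all real t with |t| ≥ α. -/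

import Mathlib

open ProbabilityTheory

/-- The cumulative distribution function of the standard Gaussian measure on ℝ. -/
noncomputable def stdGaussianCDF (x : ℝ) : ℝ := cdf (gaussianReal 0 1) x

/-- The GeLU activation function. -/
noncomputable def gelu (x : ℝ) : ℝ := x * stdGaussianCDF x

/-- The input `(x, y, t)` regarded as a vector in ℝ^{2d+1}. -/
def concatInput (d : ℕ) (x y : Fin d → ℝ) (t : ℝ) : Fin (2 * d + 1) → ℝ :=
  fun k =>
    if h : (k : ℕ) < d then x ⟨k, h⟩
    else if h' : (k : ℕ) < 2 * d then y ⟨(k : ℕ) - d, by omega⟩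
    else t

/-- The selection function: `g (x, y, t) = x` if `t ≥ 0`, and `y` if `t < 0`. -/
noncomputable def selection (d : ℕ) (x y : Fin d → ℝ) (t : ℝ) : Fin d → ℝ :=
  if 0 ≤ t then x else y


open MeasureTheory Real Filter Set in
lemma stdGaussianPDF_eq (x : ℝ) :
    gaussianPDFReal 0 1 x = (Real.sqrt (2*π))⁻¹ * Real.exp (-x^2/2) := by
  simp [gaussianPDFReal]

open MeasureTheory Real Filter Set in
lemma integrable_phi : Integrable (gaussianPDFReal 0 1) := integrable_gaussianPDFReal 0 1

open MeasureTheory Real Filter Set in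
lemma integrable_xexp : Integrable (fun x : ℝ => x * Real.exp (-x^2/2)) := by
  have h := integrable_mul_exp_neg_mul_sq (b := (1/2 : ℝ)) (by norm_num)
  have heq : (fun x : ℝ => x * Real.exp (-(1/2 : ℝ) * x^2)) = fun x : ℝ => x * Real.exp (-x^2/2) := by
    funext x
    rw [show -(1/2 : ℝ) * x^2 = -x^2/2 by ring]
  rwa [heq] at h

open MeasureTheory Real Filter Set in
lemma hasDerivAt_negexp (x : ℝ) :
    HasDerivAt (fun y : ℝ => -Real.exp (-y^2/2)) (x * Real.exp (-x^2/2)) x := by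
  have h1 : HasDerivAt (fun y : ℝ => -y^2/2) (-x) x := by
    have h0 := ((hasDerivAt_pow 2 x).neg.div_const 2)
    refine h0.congr_deriv ?_
    push_cast; ring
  have h2 := (h1.exp).neg
  refine h2.congr_deriv ?_
  ring

open MeasureTheory Real Filter Set in
lemma intIoi (z : ℝ) : ∫ x in Set.Ioi z, x * Real.exp (-x^2/2) = Real.exp (-z^2/2) := by
  have hcont : ContinuousWithinAt (fun y : ℝ => -Real.exp (-y^2/2)) (Set.Ici z) z := by
    apply Continuous.continuousWithinAt
    fun_prop
  have htop : Tendsto (fun y : ℝ => -Real.exp (-y^2/2)) atTop (nhds 0) := by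
    rw [show (0:ℝ) = -0 by ring]
    apply Filter.Tendsto.neg
    apply Real.tendsto_exp_atBot.comp
    have h1 : Tendsto (fun y : ℝ => y^2/2) atTop atTop :=
      (tendsto_pow_atTop (two_ne_zero)).atTop_div_const (by norm_num)
    have h2 := tendsto_neg_atTop_atBot.comp h1
    exact h2.congr (fun y => by simp only [Function.comp_apply]; ring)
  rw [MeasureTheory.integral_Ioi_of_hasDerivAt_of_tendsto hcont
    (fun x _ => hasDerivAt_negexp x) integrable_xexp.integrableOn htop]
  ring

open MeasureTheory Real Filter Set in
lemma intIic (z : ℝ) : ∫ x in Set.Iic z, x * Real.exp (-x^2/2) = -Real.exp (-z^2/2) := by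
  have hcont : ContinuousWithinAt (fun y : ℝ => -Real.exp (-y^2/2)) (Set.Iic z) z := by
    apply Continuous.continuousWithinAt
    fun_prop
  have hbot : Tendsto (fun y : ℝ => -Real.exp (-y^2/2)) atBot (nhds 0) := by
    rw [show (0:ℝ) = -0 by ring]
    apply Filter.Tendsto.neg
    apply Real.tendsto_exp_atBot.comp
    have h0 : Tendsto (fun y : ℝ => y^2) atBot atTop := by
      have := (tendsto_pow_atTop (two_ne_zero (α := ℕ))).comp
        (tendsto_abs_atBot_atTop (G := ℝ))
      exact this.congr (fun y => by simp [sq_abs])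
    have h1 : Tendsto (fun y : ℝ => y^2/2) atBot atTop := h0.atTop_div_const (by norm_num)
    have h2 := tendsto_neg_atTop_atBot.comp h1
    exact h2.congr (fun y => by simp only [Function.comp_apply]; ring)
  rw [MeasureTheory.integral_Iic_of_hasDerivAt_of_tendsto hcont
    (fun x _ => (hasDerivAt_negexp x)) integrable_xexp.integrableOn hbot]
  ring

open MeasureTheory Real Filter Set in
lemma cdf_int (z : ℝ) : stdGaussianCDF z = ∫ x in Set.Iic z, gaussianPDFReal 0 1 x := by
  rw [stdGaussianCDF, cdf_eq_real, measureReal_def, gaussianReal_apply_eq_integral 0 one_ne_zero,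
    ENNReal.toReal_ofReal]
  exact setIntegral_nonneg measurableSet_Iic (fun x _ => gaussianPDFReal_nonneg 0 1 x)

open MeasureTheory Real Filter Set in
lemma tail_int (z : ℝ) : 1 - stdGaussianCDF z = ∫ x in Set.Ioi z, gaussianPDFReal 0 1 x := by
  have h := integral_add_compl (measurableSet_Iic : MeasurableSet (Set.Iic z))
    integrable_phi (μ := volume)
  rw [Set.compl_Iic] at h
  have h1 := integral_gaussianPDFReal_eq_one 0 (one_ne_zero)
  rw [cdf_int]
  linarith

open MeasureTheory Real Filter Set in
lemma sqrt_two_pi_inv_le_one : (Real.sqrt (2*π))⁻¹ ≤ 1 := by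
  have h1 : (1:ℝ) ≤ Real.sqrt (2*π) := by
    rw [show (1:ℝ) = Real.sqrt 1 by simp]
    apply Real.sqrt_le_sqrt
    nlinarith [Real.pi_gt_three]
  have h2 : (0:ℝ) < Real.sqrt (2*π) := by positivity
  rw [inv_le_one_iff₀]
  right
  exact h1

open MeasureTheory Real Filter Set in
lemma tailA (z : ℝ) (hz : 0 < z) : z * (1 - stdGaussianCDF z) ≤ 1 := by
  rw [tail_int]
  have mono : ∫ x in Set.Ioi z, z * gaussianPDFReal 0 1 x
      ≤ ∫ x in Set.Ioi z, x * gaussianPDFReal 0 1 x := by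
    apply setIntegral_mono_on (integrable_phi.const_mul z).integrableOn
      (by
        have : (fun x : ℝ => x * gaussianPDFReal 0 1 x)
            = fun x : ℝ => (Real.sqrt (2*π))⁻¹ * (x * Real.exp (-x^2/2)) := by
          funext x; rw [stdGaussianPDF_eq]; ring
        rw [this]
        exact (integrable_xexp.const_mul _).integrableOn)
      measurableSet_Ioi
    intro w hw
    exact mul_le_mul_of_nonneg_right (le_of_lt hw) (gaussianPDFReal_nonneg 0 1 w)
  have calc1 : ∫ x in Set.Ioi z, x * gaussianPDFReal 0 1 x
      = (Real.sqrt (2*π))⁻¹ * Real.exp (-z^2/2) := by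
    have heq : ∀ x : ℝ, x * gaussianPDFReal 0 1 x
        = (Real.sqrt (2*π))⁻¹ * (x * Real.exp (-x^2/2)) := by
      intro x; rw [stdGaussianPDF_eq]; ring
    simp_rw [heq]
    rw [MeasureTheory.integral_const_mul, intIoi]
  have hfinal : (Real.sqrt (2*π))⁻¹ * Real.exp (-z^2/2) ≤ 1 := by
    have h1 := sqrt_two_pi_inv_le_one
    have h2 : Real.exp (-z^2/2) ≤ 1 := by
      rw [Real.exp_le_one_iff]
      nlinarith
    nlinarith [Real.exp_pos (-z^2/2), Real.sqrt_nonneg (2*π),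
      inv_nonneg.mpr (Real.sqrt_nonneg (2*π))]
  calc z * ∫ x in Set.Ioi z, gaussianPDFReal 0 1 x
      = ∫ x in Set.Ioi z, z * gaussianPDFReal 0 1 x := by
        rw [MeasureTheory.integral_const_mul]
    _ ≤ ∫ x in Set.Ioi z, x * gaussianPDFReal 0 1 x := mono
    _ = (Real.sqrt (2*π))⁻¹ * Real.exp (-z^2/2) := calc1
    _ ≤ 1 := hfinal

open MeasureTheory Real Filter Set in
lemma tailB (z : ℝ) (hz : z < 0) : (-z) * stdGaussianCDF z ≤ 1 := by
  rw [cdf_int]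
  have mono : ∫ x in Set.Iic z, (-z) * gaussianPDFReal 0 1 x
      ≤ ∫ x in Set.Iic z, (-x) * gaussianPDFReal 0 1 x := by
    apply setIntegral_mono_on (integrable_phi.const_mul (-z)).integrableOn
      (by
        have : (fun x : ℝ => (-x) * gaussianPDFReal 0 1 x)
            = fun x : ℝ => (Real.sqrt (2*π))⁻¹ * (-(x * Real.exp (-x^2/2))) := by
          funext x; rw [stdGaussianPDF_eq]; ring
        rw [this]
        exact ((integrable_xexp.neg).const_mul _).integrableOn)
      measurableSet_Iic
    intro w hw
    exact mul_le_mul_of_nonneg_right (by simp only [Set.mem_Iic] at hw; linarith)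
      (gaussianPDFReal_nonneg 0 1 w)
  have calc1 : ∫ x in Set.Iic z, (-x) * gaussianPDFReal 0 1 x
      = (Real.sqrt (2*π))⁻¹ * Real.exp (-z^2/2) := by
    have heq : ∀ x : ℝ, (-x) * gaussianPDFReal 0 1 x
        = (Real.sqrt (2*π))⁻¹ * (-(x * Real.exp (-x^2/2))) := by
      intro x; rw [stdGaussianPDF_eq]; ring
    simp_rw [heq]
    rw [MeasureTheory.integral_const_mul, MeasureTheory.integral_neg, intIic]
    ring
  have hfinal : (Real.sqrt (2*π))⁻¹ * Real.exp (-z^2/2) ≤ 1 := by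
    have h1 := sqrt_two_pi_inv_le_one
    have h2 : Real.exp (-z^2/2) ≤ 1 := by
      rw [Real.exp_le_one_iff]
      nlinarith
    nlinarith [Real.exp_pos (-z^2/2), inv_nonneg.mpr (Real.sqrt_nonneg (2*π))]
  calc (-z) * ∫ x in Set.Iic z, gaussianPDFReal 0 1 x
      = ∫ x in Set.Iic z, (-z) * gaussianPDFReal 0 1 x := by
        rw [MeasureTheory.integral_const_mul]
    _ ≤ ∫ x in Set.Iic z, (-x) * gaussianPDFReal 0 1 x := mono
    _ = (Real.sqrt (2*π))⁻¹ * Real.exp (-z^2/2) := calc1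
    _ ≤ 1 := hfinal

lemma gelu_sub_max (z : ℝ) : |gelu z - max z 0| ≤ 1 := by
  have h0 : 0 ≤ stdGaussianCDF z := by
    rw [stdGaussianCDF]; exact ProbabilityTheory.cdf_nonneg _ z
  have h1 : stdGaussianCDF z ≤ 1 := by
    rw [stdGaussianCDF]; exact ProbabilityTheory.cdf_le_one _ z
  rcases lt_trichotomy z 0 with hz | hz | hz
  · rw [max_eq_right hz.le, sub_zero, gelu, abs_mul, abs_of_neg hz, abs_of_nonneg h0]
    exact tailB z hz
  · subst hz
    simp [gelu]
  · rw [max_eq_left hz.le, gelu]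
    have h2 := tailA z hz
    rw [show z * stdGaussianCDF z - z = -(z * (1 - stdGaussianCDF z)) by ring,
      abs_neg, abs_of_nonneg (by nlinarith)]
    exact h2


lemma sum_if_val {n m : ℕ} (p : Fin n) (hp : (p : ℕ) = m) (c : ℝ) (v : Fin n → ℝ) :
    (∑ k : Fin n, (if (k : ℕ) = m then c else 0) * v k) = c * v p := by
  subst hp
  rw [Finset.sum_eq_single p]
  · simp
  · intro k _ hk
    rw [if_neg (fun h => hk (Fin.ext h)), zero_mul]
  · intro h
    exact absurd (Finset.mem_univ p) h

lemma sum_two_if {n m₁ m₂ : ℕ} (p q : Fin n) (hp : (p : ℕ) = m₁) (hq : (q : ℕ) = m₂)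
    (a b : ℝ) (v : Fin n → ℝ) :
    (∑ k : Fin n, ((if (k : ℕ) = m₁ then a else 0) + (if (k : ℕ) = m₂ then b else 0)) * v k)
      = a * v p + b * v q := by
  simp_rw [add_mul]
  rw [Finset.sum_add_distrib, sum_if_val p hp, sum_if_val q hq]

lemma sum_four_if {n m₁ m₂ m₃ m₄ : ℕ} (p₁ p₂ p₃ p₄ : Fin n)
    (h₁ : (p₁ : ℕ) = m₁) (h₂ : (p₂ : ℕ) = m₂) (h₃ : (p₃ : ℕ) = m₃) (h₄ : (p₄ : ℕ) = m₄)
    (a₁ a₂ a₃ a₄ : ℝ) (v : Fin n → ℝ) :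
    (∑ k : Fin n, ((if (k : ℕ) = m₁ then a₁ else 0) + (if (k : ℕ) = m₂ then a₂ else 0)
        + (if (k : ℕ) = m₃ then a₃ else 0) + (if (k : ℕ) = m₄ then a₄ else 0)) * v k)
      = a₁ * v p₁ + a₂ * v p₂ + a₃ * v p₃ + a₄ * v p₄ := by
  simp_rw [add_mul]
  rw [Finset.sum_add_distrib, Finset.sum_add_distrib, Finset.sum_add_distrib,
    sum_if_val p₁ h₁, sum_if_val p₂ h₂, sum_if_val p₃ h₃, sum_if_val p₄ h₄]

/-- The paper's selection lemma: a two-layer GeLU MLP of hidden dimension 2d + 2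
approximates the selection function on `[−M, M]^d × [−M, M]^d × {t : |t| ≥ α}`;
the norm on `Fin d → ℝ` is the sup (max-coordinate) norm. -/
theorem gelu_mlp_approx_selection (d : ℕ) (hd : 1 ≤ d)
    (ε α M : ℝ) (hε : 0 < ε) (hα : 0 < α) (hM : 0 < M) :
    ∃ (W₁ : Matrix (Fin (2 * d + 2)) (Fin (2 * d + 1)) ℝ) (b₁ : Fin (2 * d + 2) → ℝ)
      (W₂ : Matrix (Fin d) (Fin (2 * d + 2)) ℝ),
      ∀ (x y : Fin d → ℝ) (t : ℝ),
        (∀ i, x i ∈ Set.Icc (-M) M) → (∀ i, y i ∈ Set.Icc (-M) M) → α ≤ |t| →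
        ‖W₂.mulVec (fun j => gelu ((W₁.mulVec (concatInput d x y t) + b₁) j)) -
          selection d x y t‖ ≤ ε := by
  obtain ⟨L, hLdef⟩ : ∃ L : ℝ, L = 4 / ε := ⟨_, rfl⟩
  have hL : 0 < L := by rw [hLdef]; positivity
  obtain ⟨K, hKdef⟩ : ∃ K : ℝ, K = (M + α) / α := ⟨_, rfl⟩
  have hK : 0 < K := by rw [hKdef]; positivity
  have hKα : K * α = M + α := by
    rw [hKdef]; field_simp
  refine ⟨fun j k => (if (j : ℕ) < 2*d ∧ (k : ℕ) = (j : ℕ) then L else 0) +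
      (if (k : ℕ) = 2*d then (if (j : ℕ) < d ∨ (j : ℕ) = 2*d then L*K else -(L*K)) else 0),
    0,
    fun i j => (if (j : ℕ) = (i : ℕ) then L⁻¹ else 0) + (if (j : ℕ) = (i : ℕ)+d then L⁻¹ else 0) +
      (if (j : ℕ) = 2*d then -L⁻¹ else 0) + (if (j : ℕ) = 2*d+1 then -L⁻¹ else 0), ?_⟩
  intro x y t hx hy ht
  set u : Fin (2*d+1) → ℝ := concatInput d x y t with hudef
  have hux : ∀ (k : Fin (2*d+1)) (i : Fin d), (k : ℕ) = (i : ℕ) → u k = x i := by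
    intro k i hk
    have hkd : (k : ℕ) < d := hk ▸ i.isLt
    simp only [hudef, concatInput]
    rw [dif_pos hkd]
    exact congrArg x (Fin.ext hk)
  have huy : ∀ (k : Fin (2*d+1)) (i : Fin d), (k : ℕ) = (i : ℕ) + d → u k = y i := by
    intro k i hk
    have hid := i.isLt
    simp only [hudef, concatInput]
    rw [dif_neg (by omega), dif_pos (by omega)]
    exact congrArg y (Fin.ext (show (k:ℕ) - d = (i:ℕ) by omega))
  have hut : ∀ (k : Fin (2*d+1)), (k : ℕ) = 2*d → u k = t := by
    intro k hk
    simp only [hudef, concatInput]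
    rw [dif_neg (by omega), dif_neg (by omega)]
  rw [pi_norm_le_iff_of_nonneg hε.le]
  intro i
  have hi : (i : ℕ) < d := i.isLt
  rw [Pi.sub_apply, Real.norm_eq_abs]
  simp only [Matrix.mulVec, dotProduct, Pi.add_apply, Pi.zero_apply, add_zero]
  rw [sum_four_if (m₁ := (i : ℕ)) (m₂ := (i : ℕ) + d) (m₃ := 2*d) (m₄ := 2*d+1)
    (⟨(i : ℕ), by omega⟩ : Fin (2*d+2)) ⟨(i : ℕ) + d, by omega⟩ ⟨2*d, by omega⟩
    ⟨2*d+1, by omega⟩ rfl rfl rfl rfl]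
  have c1 : (i : ℕ) < 2*d := by omega
  have c2 : (i : ℕ) + d < 2*d := by omega
  have c3 : ¬((i : ℕ) + d < d) := by omega
  have c4 : (i : ℕ) + d ≠ 2*d := by omega
  have c5 : ¬(2*d < 2*d) := by omega
  have c6 : ¬(2*d < d) := by omega
  have c7 : ¬(2*d+1 < 2*d) := by omega
  have c8 : ¬(2*d+1 < d) := by omega
  have c9 : 2*d+1 ≠ 2*d := by omega
  simp only [c1, c2, c3, c4, c5, c6, c7, c8, c9, hi, true_and, false_and, true_or, false_or,
    or_false, or_self, or_true, if_true, if_false, zero_add]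
  rw [sum_two_if (m₁ := (i : ℕ)) (m₂ := 2*d) (⟨(i : ℕ), by omega⟩ : Fin (2*d+1))
    ⟨2*d, by omega⟩ rfl rfl]
  rw [sum_two_if (m₁ := (i : ℕ) + d) (m₂ := 2*d) (⟨(i : ℕ) + d, by omega⟩ : Fin (2*d+1))
    ⟨2*d, by omega⟩ rfl rfl]
  rw [sum_if_val (m := 2*d) (⟨2*d, by omega⟩ : Fin (2*d+1)) rfl]
  rw [sum_if_val (m := 2*d) (⟨2*d, by omega⟩ : Fin (2*d+1)) rfl]
  rw [hux ⟨(i : ℕ), by omega⟩ i rfl, huy ⟨(i : ℕ) + d, by omega⟩ i rfl,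
    hut ⟨2*d, by omega⟩ rfl]
  -- now the goal is in terms of gelu of four explicit reals
  have hLK : 0 < L * K := mul_pos hL hK
  have hLKα : L * K * α = L * (M + α) := by rw [mul_assoc, hKα]
  have hεL : ε / 4 * L = 1 := by rw [hLdef]; field_simp
  have hLinv : L⁻¹ = ε / 4 := by rw [hLdef, inv_div]
  have hx1 : -M ≤ x i := (hx i).1
  have hx2 : x i ≤ M := (hx i).2
  have hy1 : -M ≤ y i := (hy i).1
  have hy2 : y i ≤ M := (hy i).2
  rcases le_or_gt 0 t with htpos | htneg
  · have htα : α ≤ t := by rwa [abs_of_nonneg htpos] at ht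
    have hKt : L * (M + α) ≤ L * K * t := by
      rw [← hLKα]
      exact mul_le_mul_of_nonneg_left htα hLK.le
    simp only [selection, if_pos htpos]
    have hA1 : max (L * x i + L*K * t) 0 = L * x i + L*K * t := by
      apply max_eq_left
      linarith [mul_le_mul_of_nonneg_left hx1 hL.le, mul_le_mul_of_nonneg_left hx2 hL.le,
        mul_le_mul_of_nonneg_left hy1 hL.le, mul_le_mul_of_nonneg_left hy2 hL.le,
        hKt, (mul_pos hL hα).le, (mul_pos hL hM).le]
    have hA2 : max (L * y i + -(L*K) * t) 0 = 0 := by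
      apply max_eq_right
      linarith [mul_le_mul_of_nonneg_left hx1 hL.le, mul_le_mul_of_nonneg_left hx2 hL.le,
        mul_le_mul_of_nonneg_left hy1 hL.le, mul_le_mul_of_nonneg_left hy2 hL.le,
        hKt, (mul_pos hL hα).le, (mul_pos hL hM).le]
    have hA3 : max (L*K * t) 0 = L*K * t := by
      apply max_eq_left
      linarith [mul_le_mul_of_nonneg_left hx1 hL.le, mul_le_mul_of_nonneg_left hx2 hL.le,
        mul_le_mul_of_nonneg_left hy1 hL.le, mul_le_mul_of_nonneg_left hy2 hL.le,
        hKt, (mul_pos hL hα).le, (mul_pos hL hM).le]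
    have hA4 : max (-(L*K) * t) 0 = 0 := by
      apply max_eq_right
      linarith [mul_le_mul_of_nonneg_left hx1 hL.le, mul_le_mul_of_nonneg_left hx2 hL.le,
        mul_le_mul_of_nonneg_left hy1 hL.le, mul_le_mul_of_nonneg_left hy2 hL.le,
        hKt, (mul_pos hL hα).le, (mul_pos hL hM).le]
    have hE1 := gelu_sub_max (L * x i + L*K * t); rw [hA1] at hE1
    have hE2 := gelu_sub_max (L * y i + -(L*K) * t); rw [hA2, sub_zero] at hE2
    have hE3 := gelu_sub_max (L*K * t); rw [hA3] at hE3
    have hE4 := gelu_sub_max (-(L*K) * t); rw [hA4, sub_zero] at hE4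
    rw [hLinv]
    have expand : ε/4 * gelu (L * x i + L*K * t) + ε/4 * gelu (L * y i + -(L*K) * t) + -(ε/4) * gelu (L*K * t) + -(ε/4) * gelu (-(L*K) * t) - x i
        = ε/4 * ((gelu (L * x i + L*K * t) - (L * x i + L*K * t)) + gelu (L * y i + -(L*K) * t) - (gelu (L*K * t) - L*K * t) - gelu (-(L*K) * t)) := by
      have h' : ε/4 * L * x i = x i := by rw [hεL]; ring
      linear_combination h'
    rw [expand, abs_mul, abs_of_pos (by positivity : (0:ℝ) < ε/4)]
    rw [abs_le] at hE1 hE2 hE3 hE4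
    have habs : |(gelu (L * x i + L*K * t) - (L * x i + L*K * t)) + gelu (L * y i + -(L*K) * t) - (gelu (L*K * t) - L*K * t) - gelu (-(L*K) * t)| ≤ 4 := by
      rw [abs_le]; constructor <;> linarith [hE1.1, hE1.2, hE2.1, hE2.2, hE3.1, hE3.2, hE4.1, hE4.2]
    have hfin := mul_le_mul_of_nonneg_left habs (le_of_lt (show (0:ℝ) < ε/4 by positivity))
    linarith
  · have htα : α ≤ -t := by rw [abs_of_neg htneg] at ht; linarith
    have hKt : L * (M + α) ≤ L * K * (-t) := by
      rw [← hLKα]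
      exact mul_le_mul_of_nonneg_left htα hLK.le
    simp only [selection, if_neg (not_le.mpr htneg)]
    have hA1 : max (L * x i + L*K * t) 0 = 0 := by
      apply max_eq_right
      linarith [mul_le_mul_of_nonneg_left hx1 hL.le, mul_le_mul_of_nonneg_left hx2 hL.le,
        mul_le_mul_of_nonneg_left hy1 hL.le, mul_le_mul_of_nonneg_left hy2 hL.le,
        hKt, (mul_pos hL hα).le, (mul_pos hL hM).le]
    have hA2 : max (L * y i + -(L*K) * t) 0 = L * y i + -(L*K) * t := by
      apply max_eq_left
      linarith [mul_le_mul_of_nonneg_left hx1 hL.le, mul_le_mul_of_nonneg_left hx2 hL.le,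
        mul_le_mul_of_nonneg_left hy1 hL.le, mul_le_mul_of_nonneg_left hy2 hL.le,
        hKt, (mul_pos hL hα).le, (mul_pos hL hM).le]
    have hA3 : max (L*K * t) 0 = 0 := by
      apply max_eq_right
      linarith [mul_le_mul_of_nonneg_left hx1 hL.le, mul_le_mul_of_nonneg_left hx2 hL.le,
        mul_le_mul_of_nonneg_left hy1 hL.le, mul_le_mul_of_nonneg_left hy2 hL.le,
        hKt, (mul_pos hL hα).le, (mul_pos hL hM).le]
    have hA4 : max (-(L*K) * t) 0 = -(L*K) * t := by
      apply max_eq_left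
      linarith [mul_le_mul_of_nonneg_left hx1 hL.le, mul_le_mul_of_nonneg_left hx2 hL.le,
        mul_le_mul_of_nonneg_left hy1 hL.le, mul_le_mul_of_nonneg_left hy2 hL.le,
        hKt, (mul_pos hL hα).le, (mul_pos hL hM).le]
    have hE1 := gelu_sub_max (L * x i + L*K * t); rw [hA1, sub_zero] at hE1
    have hE2 := gelu_sub_max (L * y i + -(L*K) * t); rw [hA2] at hE2
    have hE3 := gelu_sub_max (L*K * t); rw [hA3, sub_zero] at hE3
    have hE4 := gelu_sub_max (-(L*K) * t); rw [hA4] at hE4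
    rw [hLinv]
    have expand : ε/4 * gelu (L * x i + L*K * t) + ε/4 * gelu (L * y i + -(L*K) * t) + -(ε/4) * gelu (L*K * t) + -(ε/4) * gelu (-(L*K) * t) - y i
        = ε/4 * (gelu (L * x i + L*K * t) + (gelu (L * y i + -(L*K) * t) - (L * y i + -(L*K) * t)) - gelu (L*K * t) - (gelu (-(L*K) * t) - (-(L*K) * t))) := by
      have h' : ε/4 * L * y i = y i := by rw [hεL]; ring
      linear_combination h'
    rw [expand, abs_mul, abs_of_pos (by positivity : (0:ℝ) < ε/4)]
    rw [abs_le] at hE1 hE2 hE3 hE4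
    have habs : |gelu (L * x i + L*K * t) + (gelu (L * y i + -(L*K) * t) - (L * y i + -(L*K) * t)) - gelu (L*K * t) - (gelu (-(L*K) * t) - (-(L*K) * t))| ≤ 4 := by
      rw [abs_le]; constructor <;> linarith [hE1.1, hE1.2, hE2.1, hE2.2, hE3.1, hE3.2, hE4.1, hE4.2]
    have hfin := mul_le_mul_of_nonneg_left habs (le_of_lt (show (0:ℝ) < ε/4 by positivity))
    linarith
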